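/- arXiv:2304.11334 — 2 statements merged into one kernel-verified Lean document; each statement's English description precedes it below -/
import Mathlib

section
/- Fix a real number c with 0 < c ≤ 1/2, and define g: [0,3-2c] × ℝ_{≥0} → ℝ by: g(u,v) = v/2 if 0 ≤ v ≤ 3-2c-u; g(u,v) = (3-u-2c)/2 if 3-2c-u ≤ v ≤ 4-4c; g(u,v) = (7-6c-u-v)/2 if 4-4c ≤ v ≤ 7-6c-u. Then (3/(6(1-c)(3-2c)^2)) * ∫_0^{3-2c} ∫_0^{7-6c-u} g(u,v)^2 dv du = 1 - c - (68c^2 - 124c + 57)/(96(1-c)). -/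
open MeasureTheory

open intervalIntegral


lemma quad_int (A B C a b : ℝ) :
    (∫ x in a..b, (A + B*x + C*x^2)) = A*(b-a) + B*(b^2-a^2)/2 + C*(b^3-a^3)/3 := by
  have h : ∀ x ∈ Set.uIcc a b, HasDerivAt (fun x => A*x + B*x^2/2 + C*x^3/3) (A + B*x + C*x^2) x := by
    intro x _
    have h1 : HasDerivAt (fun x:ℝ => A*x + B*x^2/2 + C*x^3/3)
        (A*1 + B*((2:ℕ)*x^1)/2 + C*((3:ℕ)*x^2)/3) x :=
      (((hasDerivAt_id x).const_mul A).add (((hasDerivAt_pow 2 x).const_mul B).div_const 2)).add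
        (((hasDerivAt_pow 3 x).const_mul C).div_const 3)
    convert h1 using 1
    push_cast; ring
  rw [intervalIntegral.integral_eq_sub_of_hasDerivAt h
    (Continuous.intervalIntegrable (by continuity) _ _)]
  ring

lemma cubic_int (A B C D a b : ℝ) :
    (∫ x in a..b, (A + B*x + C*x^2 + D*x^3)) =
      A*(b-a) + B*(b^2-a^2)/2 + C*(b^3-a^3)/3 + D*(b^4-a^4)/4 := by
  have h : ∀ x ∈ Set.uIcc a b, HasDerivAt (fun x => A*x + B*x^2/2 + C*x^3/3 + D*x^4/4)
      (A + B*x + C*x^2 + D*x^3) x := by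
    intro x _
    have h1 : HasDerivAt (fun x:ℝ => A*x + B*x^2/2 + C*x^3/3 + D*x^4/4)
        (A*1 + B*((2:ℕ)*x^1)/2 + C*((3:ℕ)*x^2)/3 + D*((4:ℕ)*x^3)/4) x :=
      ((((hasDerivAt_id x).const_mul A).add (((hasDerivAt_pow 2 x).const_mul B).div_const 2)).add
        (((hasDerivAt_pow 3 x).const_mul C).div_const 3)).add
        (((hasDerivAt_pow 4 x).const_mul D).div_const 4)
    convert h1 using 1
    push_cast; ring
  rw [intervalIntegral.integral_eq_sub_of_hasDerivAt h
    (Continuous.intervalIntegrable (by continuity) _ _)]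
  ring

lemma II_congr {f h : ℝ → ℝ} {a b : ℝ} (hf : Continuous f)
    (heq : Set.EqOn f h (Set.uIcc a b)) : IntervalIntegrable h volume a b :=
  (hf.intervalIntegrable a b).congr
    (fun x hx => heq (Set.uIoc_subset_uIcc hx))

theorem stmt_5 (c : ℝ) (hc0 : 0 < c) (hc1 : c ≤ 1/2) (g : ℝ → ℝ → ℝ)
    (hg1 : ∀ u v, 0 ≤ u → u ≤ 3 - 2*c → 0 ≤ v → v ≤ 3 - 2*c - u → g u v = v / 2)
    (hg2 : ∀ u v, 0 ≤ u → u ≤ 3 - 2*c → 3 - 2*c - u ≤ v → v ≤ 4 - 4*c →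
      g u v = (3 - u - 2*c) / 2)
    (hg3 : ∀ u v, 0 ≤ u → u ≤ 3 - 2*c → 4 - 4*c ≤ v → v ≤ 7 - 6*c - u →
      g u v = (7 - 6*c - u - v) / 2) :
    (3 / (6 * (1 - c) * (3 - 2*c)^2)) *
      (∫ u in (0:ℝ)..(3 - 2*c), ∫ v in (0:ℝ)..(7 - 6*c - u), (g u v)^2) =
    1 - c - (68*c^2 - 124*c + 57) / (96 * (1 - c)) := by
  have key : Set.EqOn (fun u => ∫ v in (0:ℝ)..(7 - 6*c - u), (g u v)^2)
      (fun u => (3-2*c-u)^3/6 + (3-2*c-u)^2*(1-2*c+u)/4) (Set.uIcc 0 (3 - 2*c)) := by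
    intro u hu
    rw [Set.uIcc_of_le (by linarith)] at hu
    obtain ⟨hu0, hus⟩ := hu
    have ha0 : (0:ℝ) ≤ 3 - 2*c - u := by linarith
    have hab : (3 - 2*c - u : ℝ) ≤ 4 - 4*c := by linarith
    have hbt : (4 - 4*c : ℝ) ≤ 7 - 6*c - u := by linarith
    have e1 : Set.EqOn (fun v => 0 + 0*v + (1/4)*v^2) (fun v => (g u v)^2)
        (Set.uIcc 0 (3-2*c-u)) := by
      intro v hv
      rw [Set.uIcc_of_le ha0] at hv
      simp only [hg1 u v hu0 hus hv.1 hv.2]; ring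
    have e2 : Set.EqOn (fun v => ((3-u-2*c)/2)^2 + 0*v + 0*v^2) (fun v => (g u v)^2)
        (Set.uIcc (3-2*c-u) (4-4*c)) := by
      intro v hv
      rw [Set.uIcc_of_le hab] at hv
      simp only [hg2 u v hu0 hus hv.1 hv.2]; ring
    have e3 : Set.EqOn (fun v => (7-6*c-u)^2/4 + (-(7-6*c-u)/2)*v + (1/4)*v^2)
        (fun v => (g u v)^2) (Set.uIcc (4-4*c) (7-6*c-u)) := by
      intro v hv
      rw [Set.uIcc_of_le hbt] at hv
      simp only [hg3 u v hu0 hus hv.1 hv.2]; ring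
    have I1 : IntervalIntegrable (fun v => (g u v)^2) volume 0 (3-2*c-u) :=
      II_congr (by fun_prop) e1
    have I2 : IntervalIntegrable (fun v => (g u v)^2) volume (3-2*c-u) (4-4*c) :=
      II_congr (by fun_prop) e2
    have I3 : IntervalIntegrable (fun v => (g u v)^2) volume (4-4*c) (7-6*c-u) :=
      II_congr (by fun_prop) e3
    simp only
    rw [← intervalIntegral.integral_add_adjacent_intervals I1 (I2.trans I3),
        ← intervalIntegral.integral_add_adjacent_intervals I2 I3,
        ← intervalIntegral.integral_congr e1, ← intervalIntegral.integral_congr e2,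
        ← intervalIntegral.integral_congr e3, quad_int, quad_int, quad_int]
    ring
  rw [intervalIntegral.integral_congr key,
      intervalIntegral.integral_congr
        (g := fun u => ((3-2*c)^3/6 + (1-2*c)*(3-2*c)^2/4) +
          (-(3-2*c)^2/4 - (1-2*c)*(3-2*c)/2)*u + ((1-2*c)/4)*u^2 + (1/12)*u^3)
        (fun u _ => by ring), cubic_int]
  have h1 : (1:ℝ) - c > 0 := by linarith
  have h2 : (3:ℝ) - 2*c > 0 := by linarith
  have h3 : (3:ℝ) - c*2 ≠ 0 := by linarith
  have h4 : (1:ℝ) - c ≠ 0 := ne_of_gt h1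
  field_simp
  ring
end

section
/- Fix a real number c with 0 < c < 1, and define Q: [0,3-2c] × ℝ_{≥0} → ℝ as follows. For 0 ≤ u ≤ 2-2c: Q(u,v) = (4-4c)u - v^2 if 0 ≤ v ≤ u; Q(u,v) = u(4-4c+u-2v) if u ≤ v ≤ 2-2c; Q(u,v) = (2-2c+u-v)^2 if 2-2c ≤ v ≤ 2-2c+u. For 2-2c ≤ u ≤ 3-2c: Q(u,v) = (4-4c)u - v^2 if 0 ≤ v ≤ 2-2c; Q(u,v) = 4(1-c)(1-c+u-v) if 2-2c ≤ v ≤ u; Q(u,v) = (2-2c+u-v)^2 if u ≤ v ≤ 2-2c+u. Then (3/(6(1-c)(3-2c)^2)) * ∫_0^{3-2c} ∫_0^{2-2c+u} Q(u,v) dv du = 2 - (5/3)c. -/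
open MeasureTheory

lemma poly_int' (p q r x y : ℝ) :
    ∫ v in x..y, (p + q*v + r*v^2) = p*(y-x) + q*(y^2-x^2)/2 + r*(y^3-x^3)/3 := by
  have h3 : IntervalIntegrable (fun _ : ℝ => (p:ℝ)) volume x y := intervalIntegrable_const
  have h4 : IntervalIntegrable (fun v : ℝ => q*v) volume x y :=
    (continuous_const.mul continuous_id).intervalIntegrable x y
  have h1 : IntervalIntegrable (fun v : ℝ => p + q*v) volume x y := h3.add h4
  have h2 : IntervalIntegrable (fun v : ℝ => r*v^2) volume x y :=
    (continuous_const.mul (continuous_pow 2)).intervalIntegrable x y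
  rw [intervalIntegral.integral_add h1 h2, intervalIntegral.integral_add h3 h4,
    intervalIntegral.integral_const, intervalIntegral.integral_const_mul,
    intervalIntegral.integral_const_mul, integral_id,
    integral_pow]
  rw [smul_eq_mul]
  push_cast
  ring

lemma piece' (f : ℝ → ℝ) (p q r x y : ℝ)
    (h : Set.EqOn f (fun v => p + q*v + r*v^2) (Set.uIcc x y)) :
    IntervalIntegrable f volume x y ∧
      ∫ v in x..y, f v = p*(y-x) + q*(y^2-x^2)/2 + r*(y^3-x^3)/3 := by
  have hc : Continuous (fun v : ℝ => p + q*v + r*v^2) := by continuity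
  have hpoly : IntervalIntegrable (fun v : ℝ => p + q*v + r*v^2) volume x y :=
    hc.intervalIntegrable x y
  constructor
  · rw [intervalIntegrable_iff] at hpoly ⊢
    exact hpoly.congr_fun (fun v hv => (h (Set.uIoc_subset_uIcc hv)).symm) measurableSet_uIoc
  · rw [intervalIntegral.integral_congr h, poly_int']

theorem stmt_7 (c : ℝ) (hc0 : 0 < c) (hc1 : c < 1) (Q : ℝ → ℝ → ℝ)
    (hQ1 : ∀ u v, 0 ≤ u → u ≤ 2 - 2*c → 0 ≤ v → v ≤ u → Q u v = (4 - 4*c)*u - v^2)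
    (hQ2 : ∀ u v, 0 ≤ u → u ≤ 2 - 2*c → u ≤ v → v ≤ 2 - 2*c →
      Q u v = u * (4 - 4*c + u - 2*v))
    (hQ3 : ∀ u v, 0 ≤ u → u ≤ 2 - 2*c → 2 - 2*c ≤ v → v ≤ 2 - 2*c + u →
      Q u v = (2 - 2*c + u - v)^2)
    (hQ4 : ∀ u v, 2 - 2*c ≤ u → u ≤ 3 - 2*c → 0 ≤ v → v ≤ 2 - 2*c →
      Q u v = (4 - 4*c)*u - v^2)
    (hQ5 : ∀ u v, 2 - 2*c ≤ u → u ≤ 3 - 2*c → 2 - 2*c ≤ v → v ≤ u →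
      Q u v = 4 * (1 - c) * (1 - c + u - v))
    (hQ6 : ∀ u v, 2 - 2*c ≤ u → u ≤ 3 - 2*c → u ≤ v → v ≤ 2 - 2*c + u →
      Q u v = (2 - 2*c + u - v)^2) :
    (3 / (6 * (1 - c) * (3 - 2*c)^2)) *
      (∫ u in (0:ℝ)..(3 - 2*c), ∫ v in (0:ℝ)..(2 - 2*c + u), Q u v) =
    2 - (5/3) * c := by
  have ha0 : (0:ℝ) ≤ 2 - 2*c := by linarith
  have hb0 : (0:ℝ) ≤ 3 - 2*c := by linarith
  have inner : Set.EqOn (fun u => ∫ v in (0:ℝ)..(2 - 2*c + u), Q u v)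
      (fun u => (2-2*c)*u^2 + (2-2*c)^2*u) (Set.uIcc (0:ℝ) (3 - 2*c)) := by
    intro u hu
    rw [Set.uIcc_of_le hb0] at hu
    obtain ⟨hu0, hu1⟩ := hu
    simp only []
    rcases le_or_gt u (2-2*c) with hca | hca
    · -- case u ≤ 2 - 2c
      obtain ⟨i1, e1⟩ := piece' (Q u) ((4-4*c)*u) 0 (-1) 0 u (by
        intro v hv
        rw [Set.uIcc_of_le hu0] at hv
        simp only [hQ1 u v hu0 hca hv.1 hv.2]; ring)
      obtain ⟨i2, e2⟩ := piece' (Q u) (u*(4-4*c+u)) (-2*u) 0 u (2-2*c) (by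
        intro v hv
        rw [Set.uIcc_of_le hca] at hv
        simp only [hQ2 u v hu0 hca hv.1 hv.2]; ring)
      obtain ⟨i3, e3⟩ := piece' (Q u) ((2-2*c+u)^2) (-2*(2-2*c+u)) 1 (2-2*c) (2-2*c+u) (by
        intro v hv
        rw [Set.uIcc_of_le (by linarith : (2-2*c:ℝ) ≤ 2-2*c+u)] at hv
        simp only [hQ3 u v hu0 hca hv.1 hv.2]; ring)
      rw [← intervalIntegral.integral_add_adjacent_intervals i1 (i2.trans i3),
        ← intervalIntegral.integral_add_adjacent_intervals i2 i3, e1, e2, e3]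
      ring
    · -- case 2 - 2c ≤ u
      have hca' : 2 - 2*c ≤ u := hca.le
      obtain ⟨i1, e1⟩ := piece' (Q u) ((4-4*c)*u) 0 (-1) 0 (2-2*c) (by
        intro v hv
        rw [Set.uIcc_of_le ha0] at hv
        simp only [hQ4 u v hca' hu1 hv.1 hv.2]; ring)
      obtain ⟨i2, e2⟩ := piece' (Q u) (4*(1-c)*(1-c+u)) (-4*(1-c)) 0 (2-2*c) u (by
        intro v hv
        rw [Set.uIcc_of_le hca'] at hv
        simp only [hQ5 u v hca' hu1 hv.1 hv.2]; ring)
      obtain ⟨i3, e3⟩ := piece' (Q u) ((2-2*c+u)^2) (-2*(2-2*c+u)) 1 u (2-2*c+u) (by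
        intro v hv
        rw [Set.uIcc_of_le (by linarith : u ≤ 2-2*c+u)] at hv
        simp only [hQ6 u v hca' hu1 hv.1 hv.2]; ring)
      rw [← intervalIntegral.integral_add_adjacent_intervals i1 (i2.trans i3),
        ← intervalIntegral.integral_add_adjacent_intervals i2 i3, e1, e2, e3]
      ring
  rw [intervalIntegral.integral_congr inner]
  obtain ⟨-, eo⟩ := piece' (fun u => (2-2*c)*u^2 + (2-2*c)^2*u) 0 ((2-2*c)^2) (2-2*c)
      0 (3-2*c) (fun u _ => by ring)
  rw [eo]
  have h1c : (1:ℝ) - c ≠ 0 := by linarith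
  have h3c : (3:ℝ) - 2*c ≠ 0 := by linarith
  rw [div_mul_eq_mul_div, div_eq_iff (mul_ne_zero (mul_ne_zero (by norm_num) h1c) (pow_ne_zero 2 h3c))]
  ring
end
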